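/- Let (A(t))_{0≤t≤T} with A(t) = ∫₀^t (B(u)+C(u)) du, where B is a nonnegative adapted continuous process with E[∫₀^T B(u) du] < ∞ and C is a uniformly bounded adapted continuous process, on a probability space with a left-continuous filtration (F(t)). Fix t₀ ∈ (0,T] such that lim_{t↑t₀} E[A(t₀)−A(t)]/(t₀−t) = E[B(t₀)+C(t₀)]. Then the conditional expectations also converge: lim_{t↑t₀} E[A(t₀)−A(t) | F(t)]/(t₀−t) = B(t₀) + C(t₀), with the limit taken in L¹(ℙ). -/

import Mathlib

open MeasureTheory Filter
open scoped Topology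
open scoped ENNReal

lemma levy_aux {Ω : Type*} {m0 : MeasurableSpace Ω} (μ : Measure Ω)
    [IsProbabilityMeasure μ] (ℱ : Filtration ℝ m0) (t₀ : ℝ)
    (hleft : (⨆ s : {s : ℝ // s < t₀}, (ℱ s : MeasurableSpace Ω)) = ℱ t₀)
    (Y : Ω → ℝ) (hY : Integrable Y μ) (hYm : StronglyMeasurable[ℱ t₀] Y) :
    Tendsto (fun t => ∫ ω, |(μ[Y|ℱ t]) ω - Y ω| ∂μ) (𝓝[<] t₀) (𝓝 0) := by
  have hs_lt : ∀ n : ℕ, t₀ - 1 / (n + 1) < t₀ := fun n => by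
    have : (0:ℝ) < 1 / (n + 1) := by positivity
    linarith
  have hs_mono : Monotone fun n : ℕ => t₀ - 1 / (n + 1 : ℝ) := by
    intro m n hmn
    have h1 : ((m:ℝ) + 1) ≤ (n:ℝ) + 1 := by exact_mod_cast Nat.succ_le_succ hmn
    have : (1:ℝ) / (n + 1) ≤ 1 / (m + 1) :=
      one_div_le_one_div_of_le (by positivity) h1
    simp only
    linarith
  set 𝒢 : Filtration ℕ m0 :=
    ⟨fun n => ℱ (t₀ - 1 / (n + 1)), fun m n hmn => ℱ.mono (hs_mono hmn), fun n => ℱ.le _⟩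
    with h𝒢
  have hsup : (⨆ n, (𝒢 n : MeasurableSpace Ω)) = ℱ t₀ := by
    apply le_antisymm
    · exact iSup_le fun n => ℱ.mono (hs_lt n).le
    · rw [← hleft]
      refine iSup_le fun r => ?_
      obtain ⟨n, hn⟩ := exists_nat_one_div_lt (sub_pos.2 r.2)
      refine le_trans (ℱ.mono ?_) (le_iSup (fun n => (𝒢 n : MeasurableSpace Ω)) n)
      have : (1:ℝ) / (n + 1) < t₀ - r := hn
      linarith
  have hconv := hY.tendsto_eLpNorm_condExp (ℱ := 𝒢) (hsup ▸ hYm)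
  refine Metric.tendsto_nhds.2 fun ε hε => ?_
  have h0 : (0:ℝ≥0∞) < ENNReal.ofReal (ε / 3) := ENNReal.ofReal_pos.2 (by linarith)
  obtain ⟨N, hN⟩ := (hconv.eventually (gt_mem_nhds h0)).exists
  have hZint : Integrable (μ[Y|𝒢 N]) μ := integrable_condExp
  have hZY : ∫ ω, |(μ[Y|𝒢 N]) ω - Y ω| ∂μ < ε / 3 := by
    have hint : Integrable (fun ω => (μ[Y|𝒢 N]) ω - Y ω) μ := hZint.sub hY
    have heq : ∫ ω, |(μ[Y|𝒢 N]) ω - Y ω| ∂μ = (eLpNorm (μ[Y|𝒢 N] - Y) 1 μ).toReal := by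
      rw [eLpNorm_one_eq_lintegral_enorm]
      simp only [Pi.sub_apply]
      rw [← integral_norm_eq_lintegral_enorm hint.aestronglyMeasurable]
      simp [Real.norm_eq_abs]
    rw [heq]
    exact ENNReal.toReal_lt_of_lt_ofReal hN
  filter_upwards [Ico_mem_nhdsLT (hs_lt N)] with t ht
  rw [Real.dist_eq, sub_zero, abs_of_nonneg (integral_nonneg fun ω => abs_nonneg _)]
  have hZm : StronglyMeasurable[ℱ t] (μ[Y|𝒢 N]) :=
    stronglyMeasurable_condExp.mono (ℱ.mono ht.1)
  have hZfix : μ[μ[Y|𝒢 N]|ℱ t] = μ[Y|𝒢 N] :=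
    condExp_of_stronglyMeasurable (ℱ.le t) hZm hZint
  have hsub : μ[Y|ℱ t] - μ[Y|𝒢 N] =ᵐ[μ] μ[Y - μ[Y|𝒢 N]|ℱ t] := by
    have h2 := condExp_sub (m := ℱ t) (μ := μ) hY hZint
    rw [hZfix] at h2
    exact h2.symm
  have hcint : Integrable (μ[Y|ℱ t]) μ := integrable_condExp
  have key : ∫ ω, |(μ[Y|ℱ t]) ω - (μ[Y|𝒢 N]) ω| ∂μ ≤ ∫ ω, |Y ω - (μ[Y|𝒢 N]) ω| ∂μ := by
    have h1 : ∫ ω, |(μ[Y|ℱ t]) ω - (μ[Y|𝒢 N]) ω| ∂μ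
        = ∫ ω, |(μ[Y - μ[Y|𝒢 N]|ℱ t]) ω| ∂μ := by
      refine integral_congr_ae (hsub.mono fun ω hω => ?_)
      simp only [Pi.sub_apply] at hω
      simp only [hω]
    have h2 : ∫ ω, |Y ω - (μ[Y|𝒢 N]) ω| ∂μ = ∫ ω, |(Y - μ[Y|𝒢 N]) ω| ∂μ := by
      simp only [Pi.sub_apply]
    rw [h1, h2]
    exact integral_abs_condExp_le _
  calc ∫ ω, |(μ[Y|ℱ t]) ω - Y ω| ∂μ
      ≤ ∫ ω, (|(μ[Y|ℱ t]) ω - (μ[Y|𝒢 N]) ω| + |(μ[Y|𝒢 N]) ω - Y ω|) ∂μ := by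
        refine integral_mono (hcint.sub hY).abs ((hcint.sub hZint).abs.add (hZint.sub hY).abs)
          fun ω => abs_sub_le _ _ _
    _ = ∫ ω, |(μ[Y|ℱ t]) ω - (μ[Y|𝒢 N]) ω| ∂μ + ∫ ω, |(μ[Y|𝒢 N]) ω - Y ω| ∂μ :=
        integral_add (hcint.sub hZint).abs (hZint.sub hY).abs
    _ ≤ ∫ ω, |Y ω - (μ[Y|𝒢 N]) ω| ∂μ + ∫ ω, |(μ[Y|𝒢 N]) ω - Y ω| ∂μ := by gcongr
    _ = 2 * ∫ ω, |(μ[Y|𝒢 N]) ω - Y ω| ∂μ := by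
        simp_rw [abs_sub_comm (Y _)]; ring
    _ < ε := by linarith


/-- Lebesgue differentiation for conditional expectations: if
`A(t) = ∫₀ᵗ (B(u) + C(u)) du` with `B ≥ 0` continuous adapted and time-integrable
in expectation, `C` continuous adapted and uniformly bounded, the filtration is
left-continuous, and `t₀` is a Lebesgue point in the sense that
`E[A(t₀) − A(t)]/(t₀ − t) → E[B(t₀) + C(t₀)]` as `t ↑ t₀`, then also
`E[A(t₀) − A(t) | F(t)]/(t₀ − t) → B(t₀) + C(t₀)` in `L¹(ℙ)`. -/
theorem stmt12 {Ω : Type*} {m0 : MeasurableSpace Ω} (μ : Measure Ω)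
    [IsProbabilityMeasure μ] (ℱ : Filtration ℝ m0)
    (hleft : ∀ t : ℝ, (⨆ s : {s : ℝ // s < t}, (ℱ s : MeasurableSpace Ω)) = ℱ t)
    (T : ℝ) (hT : 0 < T)
    (B C : ℝ → Ω → ℝ)
    (hBad : Adapted ℱ B) (hCad : Adapted ℱ C)
    (hBcont : ∀ ω, Continuous fun t => B t ω) (hCcont : ∀ ω, Continuous fun t => C t ω)
    (hBpos : ∀ t ω, 0 ≤ B t ω)
    (hBint : Integrable (fun ω => ∫ u in (0:ℝ)..T, B u ω) μ)
    (hCbd : ∃ K : ℝ, ∀ t ω, |C t ω| ≤ K)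
    (A : ℝ → Ω → ℝ) (hA : ∀ t ω, A t ω = ∫ u in (0:ℝ)..t, (B u ω + C u ω))
    (t₀ : ℝ) (ht₀ : t₀ ∈ Set.Ioc 0 T)
    (hLeb : Tendsto (fun t => (∫ ω, (A t₀ ω - A t ω) ∂μ) / (t₀ - t)) (𝓝[<] t₀)
      (𝓝 (∫ ω, (B t₀ ω + C t₀ ω) ∂μ))) :
    Tendsto
      (fun t => ∫ ω, |(μ[fun ω' => A t₀ ω' - A t ω' | ℱ t]) ω / (t₀ - t) -
        (B t₀ ω + C t₀ ω)| ∂μ)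
      (𝓝[<] t₀) (𝓝 0) := by
  obtain ⟨t₀pos, ht₀T⟩ := ht₀
  obtain ⟨K₀, hK₀⟩ := hCbd
  set K := max K₀ 0 with hKdef
  have hKnn : (0:ℝ) ≤ K := le_max_right _ _
  have hCK : ∀ t ω, |C t ω| ≤ K := fun t ω => (hK₀ t ω).trans (le_max_left _ _)
  have hDcont : ∀ ω, Continuous fun u => B u ω + C u ω := fun ω => (hBcont ω).add (hCcont ω)
  have hDii : ∀ (ω : Ω) (a b : ℝ),
      IntervalIntegrable (fun u => B u ω + C u ω) MeasureTheory.volume a b :=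
    fun ω a b => (hDcont ω).intervalIntegrable a b
  have hYm : StronglyMeasurable[ℱ t₀] fun ω => B t₀ ω + C t₀ ω := ((hBad t₀).add (hCad t₀)).stronglyMeasurable
  have hYm0 : StronglyMeasurable fun ω => B t₀ ω + C t₀ ω := hYm.mono (ℱ.le t₀)
  have hFeq : ∀ t ω, A t₀ ω - A t ω = ∫ u in t..t₀, (B u ω + C u ω) := by
    intro t ω
    rw [hA, hA]
    exact intervalIntegral.integral_interval_sub_left (hDii ω 0 t₀) (hDii ω 0 t)
  have huncurry : StronglyMeasurable (Function.uncurry fun (u : ℝ) (ω : Ω) => B u ω + C u ω) :=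
    stronglyMeasurable_uncurry_of_continuous_of_stronglyMeasurable hDcont
      (fun u => (((hBad u).mono (ℱ.le u) le_rfl).add ((hCad u).mono (ℱ.le u) le_rfl)).stronglyMeasurable)
  have hAm : ∀ s : ℝ, StronglyMeasurable (A s) := by
    intro s
    have h1 : StronglyMeasurable fun ω => ∫ u in Set.Ioc (0:ℝ) s, (B u ω + C u ω) :=
      (huncurry.comp_measurable measurable_swap).integral_prod_right'
    have h2 : StronglyMeasurable fun ω => ∫ u in Set.Ioc s (0:ℝ), (B u ω + C u ω) :=
      (huncurry.comp_measurable measurable_swap).integral_prod_right'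
    have heq : A s = fun ω => (∫ u in Set.Ioc (0:ℝ) s, (B u ω + C u ω)) -
        ∫ u in Set.Ioc s (0:ℝ), (B u ω + C u ω) := by
      funext ω; rw [hA]; rfl
    rw [heq]
    exact h1.sub h2
  have hFm : ∀ t : ℝ, StronglyMeasurable fun ω => A t₀ ω - A t ω :=
    fun t => (hAm t₀).sub (hAm t)
  have hFbd : ∀ t, t ∈ Set.Icc (0:ℝ) t₀ → ∀ ω,
      |A t₀ ω - A t ω| ≤ (∫ u in (0:ℝ)..T, B u ω) + K * T := by
    intro t ht ω
    rw [hFeq]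
    have habs : |∫ u in t..t₀, (B u ω + C u ω)| ≤ ∫ u in t..t₀, |B u ω + C u ω| :=
      intervalIntegral.abs_integral_le_integral_abs ht.2
    have hmono : ∫ u in t..t₀, |B u ω + C u ω| ≤ ∫ u in t..t₀, (B u ω + K) := by
      refine intervalIntegral.integral_mono_on ht.2 ((hDcont ω).abs.intervalIntegrable _ _)
        (((hBcont ω).add continuous_const).intervalIntegrable _ _) fun u _ => ?_
      calc |B u ω + C u ω| ≤ |B u ω| + |C u ω| := abs_add_le _ _
        _ ≤ B u ω + K := by
            rw [abs_of_nonneg (hBpos u ω)]; have := hCK u ω; linarith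
    have hsplit : ∫ u in t..t₀, (B u ω + K) = (∫ u in t..t₀, B u ω) + (t₀ - t) * K := by
      rw [intervalIntegral.integral_add ((hBcont ω).intervalIntegrable _ _)
        intervalIntegrable_const, intervalIntegral.integral_const, smul_eq_mul]
    have hBmono : ∫ u in t..t₀, B u ω ≤ ∫ u in (0:ℝ)..T, B u ω :=
      intervalIntegral.integral_mono_interval ht.1 ht.2 ht₀T
        (Filter.Eventually.of_forall fun u => hBpos u ω) ((hBcont ω).intervalIntegrable _ _)
    have hKT : (t₀ - t) * K ≤ K * T := by nlinarith [ht.1, ht.2]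
    calc |∫ u in t..t₀, (B u ω + C u ω)| ≤ ∫ u in t..t₀, |B u ω + C u ω| := habs
      _ ≤ ∫ u in t..t₀, (B u ω + K) := hmono
      _ = (∫ u in t..t₀, B u ω) + (t₀ - t) * K := hsplit
      _ ≤ (∫ u in (0:ℝ)..T, B u ω) + K * T := by linarith
  have hgint : Integrable (fun ω => (∫ u in (0:ℝ)..T, B u ω) + K * T) μ :=
    hBint.add (integrable_const _)
  have hB0T : ∀ ω, 0 ≤ ∫ u in (0:ℝ)..T, B u ω :=
    fun ω => intervalIntegral.integral_nonneg hT.le fun u _ => hBpos u ω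
  have hFint : ∀ t, t ∈ Set.Icc (0:ℝ) t₀ → Integrable (fun ω => A t₀ ω - A t ω) μ := by
    intro t ht
    refine hgint.mono (hFm t).aestronglyMeasurable (Filter.Eventually.of_forall fun ω => ?_)
    rw [Real.norm_eq_abs, Real.norm_eq_abs]
    refine (hFbd t ht ω).trans (le_abs_self _)
  have hXlb : ∀ t, t < t₀ → ∀ ω, -K ≤ (A t₀ ω - A t ω) / (t₀ - t) := by
    intro t ht ω
    have hc : (0:ℝ) < t₀ - t := sub_pos.2 ht
    rw [le_div_iff₀ hc, hFeq]
    have h1 : ∫ u in t..t₀, (-K : ℝ) ≤ ∫ u in t..t₀, (B u ω + C u ω) := by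
      refine intervalIntegral.integral_mono_on ht.le intervalIntegrable_const (hDii ω t t₀)
        fun u _ => ?_
      have h := abs_le.1 (hCK u ω)
      have := hBpos u ω
      linarith [h.1]
    rw [intervalIntegral.integral_const, smul_eq_mul] at h1
    nlinarith [h1]
  by_cases hYint : Integrable (fun ω => B t₀ ω + C t₀ ω) μ
  swap
  · have hz : ∀ t : ℝ, ∫ ω, |(μ[fun ω' => A t₀ ω' - A t ω' | ℱ t]) ω / (t₀ - t) -
        (B t₀ ω + C t₀ ω)| ∂μ = 0 := by
      intro t
      refine integral_undef fun hcontra => hYint ?_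
      have hg : Integrable (fun ω => (μ[fun ω' => A t₀ ω' - A t ω' | ℱ t]) ω / (t₀ - t)) μ :=
        integrable_condExp.div_const _
      have hmeas : AEStronglyMeasurable (fun ω =>
          (μ[fun ω' => A t₀ ω' - A t ω' | ℱ t]) ω / (t₀ - t) - (B t₀ ω + C t₀ ω)) μ :=
        hg.aestronglyMeasurable.sub hYm0.aestronglyMeasurable
      have h2 : Integrable (fun ω =>
          (μ[fun ω' => A t₀ ω' - A t ω' | ℱ t]) ω / (t₀ - t) - (B t₀ ω + C t₀ ω)) μ := by
        refine (integrable_norm_iff hmeas).1 ?_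
        simpa [Real.norm_eq_abs] using hcontra
      have h3 := hg.sub h2
      refine h3.congr (Filter.Eventually.of_forall fun ω => ?_)
      simp only [Pi.sub_apply]
      ring
    simp only [hz]
    exact tendsto_const_nhds
  have hptw : ∀ ω, Tendsto (fun t => (A t₀ ω - A t ω) / (t₀ - t)) (𝓝[<] t₀)
      (𝓝 (B t₀ ω + C t₀ ω)) := by
    intro ω
    have hder : HasDerivAt (fun s => ∫ u in (0:ℝ)..s, (B u ω + C u ω)) (B t₀ ω + C t₀ ω) t₀ :=
      intervalIntegral.integral_hasDerivAt_right (hDii ω 0 t₀)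
        ((hDcont ω).stronglyMeasurableAtFilter _ _) (hDcont ω).continuousAt
    have hslope := hasDerivAt_iff_tendsto_slope.1 hder
    have hmono : 𝓝[<] t₀ ≤ 𝓝[≠] t₀ := nhdsWithin_mono _ fun x hx => ne_of_lt hx
    refine Tendsto.congr' ?_ (hslope.mono_left hmono)
    filter_upwards [self_mem_nhdsWithin] with t (ht : t < t₀)
    have hne : t - t₀ ≠ 0 := sub_ne_zero.2 (ne_of_lt ht)
    have hne' : t₀ - t ≠ 0 := sub_ne_zero.2 (ne_of_gt ht)
    rw [slope_def_field]
    simp only [hA]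
    rw [div_eq_div_iff hne hne']
    ring
  have hIoo : Set.Ioo (0:ℝ) t₀ ∈ 𝓝[<] t₀ := Ioo_mem_nhdsLT t₀pos
  have hSch : Tendsto (fun t => ∫ ω, |(A t₀ ω - A t ω) / (t₀ - t) - (B t₀ ω + C t₀ ω)| ∂μ)
      (𝓝[<] t₀) (𝓝 0) := by
    have hpos : Tendsto (fun t => ∫ ω,
        max ((B t₀ ω + C t₀ ω) - (A t₀ ω - A t ω) / (t₀ - t)) 0 ∂μ) (𝓝[<] t₀) (𝓝 0) := by
      have h := tendsto_integral_filter_of_dominated_convergence (μ := μ) (l := 𝓝[<] t₀)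
        (bound := fun ω => |B t₀ ω + C t₀ ω| + K)
        (F := fun t ω => max ((B t₀ ω + C t₀ ω) - (A t₀ ω - A t ω) / (t₀ - t)) 0)
        (f := fun _ => (0:ℝ)) ?_ ?_ ?_ ?_
      · simpa using h
      · refine Filter.Eventually.of_forall fun t => ?_
        exact ((hYm0.measurable.sub ((hFm t).measurable.div_const _)).max
          measurable_const).aestronglyMeasurable
      · filter_upwards [hIoo] with t ht
        refine Filter.Eventually.of_forall fun ω => ?_
        rw [Real.norm_eq_abs, abs_of_nonneg (le_max_right _ _)]
        have h1 : -K ≤ (A t₀ ω - A t ω) / (t₀ - t) := hXlb t ht.2 ω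
        have h2 : (0:ℝ) ≤ |B t₀ ω + C t₀ ω| + K := by positivity
        refine max_le ?_ h2
        have := le_abs_self (B t₀ ω + C t₀ ω)
        linarith
      · exact hYint.abs.add (integrable_const _)
      · refine Filter.Eventually.of_forall fun ω => ?_
        have hmax0 : Tendsto (fun t : ℝ => max ((B t₀ ω + C t₀ ω) - (A t₀ ω - A t ω) / (t₀ - t)) 0)
            (𝓝[<] t₀) (𝓝 (max ((B t₀ ω + C t₀ ω) - (B t₀ ω + C t₀ ω)) 0)) :=
          (Filter.Tendsto.sub tendsto_const_nhds (hptw ω)).max tendsto_const_nhds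
        simpa using hmax0
    have hmean : Tendsto (fun t => (∫ ω, (A t₀ ω - A t ω) / (t₀ - t) ∂μ) -
        ∫ ω, (B t₀ ω + C t₀ ω) ∂μ) (𝓝[<] t₀) (𝓝 0) := by
      have heq : ∀ t : ℝ, ∫ ω, (A t₀ ω - A t ω) / (t₀ - t) ∂μ =
          (∫ ω, (A t₀ ω - A t ω) ∂μ) / (t₀ - t) := fun t => integral_div _ _
      simp_rw [heq]
      simpa using hLeb.sub_const (∫ ω, (B t₀ ω + C t₀ ω) ∂μ)
    have hcomb : ∀ᶠ t in 𝓝[<] t₀,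
        ∫ ω, |(A t₀ ω - A t ω) / (t₀ - t) - (B t₀ ω + C t₀ ω)| ∂μ =
        ((∫ ω, (A t₀ ω - A t ω) / (t₀ - t) ∂μ) - ∫ ω, (B t₀ ω + C t₀ ω) ∂μ) +
          2 * ∫ ω, max ((B t₀ ω + C t₀ ω) - (A t₀ ω - A t ω) / (t₀ - t)) 0 ∂μ := by
      filter_upwards [hIoo] with t ht
      have hXint : Integrable (fun ω => (A t₀ ω - A t ω) / (t₀ - t)) μ :=
        (hFint t ⟨ht.1.le, ht.2.le⟩).div_const _
      have hmax : Integrable (fun ω =>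
          max ((B t₀ ω + C t₀ ω) - (A t₀ ω - A t ω) / (t₀ - t)) 0) μ :=
        (hYint.sub hXint).pos_part
      have hptws : ∀ ω, |(A t₀ ω - A t ω) / (t₀ - t) - (B t₀ ω + C t₀ ω)| =
          ((A t₀ ω - A t ω) / (t₀ - t) - (B t₀ ω + C t₀ ω)) +
            2 * max ((B t₀ ω + C t₀ ω) - (A t₀ ω - A t ω) / (t₀ - t)) 0 := by
        intro ω
        rcases le_total (B t₀ ω + C t₀ ω) ((A t₀ ω - A t ω) / (t₀ - t)) with h | h
        · rw [abs_of_nonneg (by linarith), max_eq_right (by linarith)]; ring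
        · rw [abs_of_nonpos (by linarith), max_eq_left (by linarith)]; ring
      simp_rw [hptws]
      have hXY : Integrable (fun ω => (A t₀ ω - A t ω) / (t₀ - t) - (B t₀ ω + C t₀ ω)) μ :=
        hXint.sub hYint
      rw [integral_add hXY (hmax.const_mul 2), integral_sub hXint hYint,
        integral_const_mul]
    have hsum := hmean.add (hpos.const_mul 2)
    rw [show (0:ℝ) + 2 * 0 = 0 by ring] at hsum
    exact Tendsto.congr' (hcomb.mono fun t h => h.symm) hsum
  have hLevy := levy_aux μ ℱ t₀ (hleft t₀) (fun ω => B t₀ ω + C t₀ ω) hYint hYm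
  have hsum := hSch.add hLevy
  rw [add_zero] at hsum
  refine squeeze_zero' (Filter.Eventually.of_forall fun t =>
    integral_nonneg fun ω => abs_nonneg _) ?_ hsum
  filter_upwards [hIoo] with t ht
  have hFtint : Integrable (fun ω' => A t₀ ω' - A t ω') μ := hFint t ⟨ht.1.le, ht.2.le⟩
  have hXint : Integrable (fun ω => (A t₀ ω - A t ω) / (t₀ - t)) μ := hFtint.div_const _
  have hcd : (fun ω => (μ[fun ω' => A t₀ ω' - A t ω'|ℱ t]) ω / (t₀ - t))
      =ᵐ[μ] μ[fun ω => (A t₀ ω - A t ω) / (t₀ - t)|ℱ t] := by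
    have h := condExp_smul (μ := μ) (m := ℱ t) ((t₀ - t)⁻¹) (fun ω' => A t₀ ω' - A t ω')
    have heqf : (fun ω => (A t₀ ω - A t ω) / (t₀ - t)) =
        (t₀ - t)⁻¹ • (fun ω' => A t₀ ω' - A t ω') := by
      funext ω; simp [div_eq_inv_mul]
    rw [heqf]
    filter_upwards [h] with ω hω
    rw [hω]
    simp [div_eq_inv_mul]
  have hcXint : Integrable (μ[fun ω => (A t₀ ω - A t ω) / (t₀ - t)|ℱ t]) μ := integrable_condExp
  have hcYint : Integrable (μ[fun ω => B t₀ ω + C t₀ ω|ℱ t]) μ := integrable_condExp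
  have hkey : ∫ ω, |(μ[fun ω => (A t₀ ω - A t ω) / (t₀ - t)|ℱ t]) ω -
      (μ[fun ω => B t₀ ω + C t₀ ω|ℱ t]) ω| ∂μ ≤
      ∫ ω, |(A t₀ ω - A t ω) / (t₀ - t) - (B t₀ ω + C t₀ ω)| ∂μ := by
    have hs := condExp_sub (m := ℱ t) (μ := μ) hXint hYint
    have h1 : ∫ ω, |(μ[fun ω => (A t₀ ω - A t ω) / (t₀ - t)|ℱ t]) ω -
        (μ[fun ω => B t₀ ω + C t₀ ω|ℱ t]) ω| ∂μ =
        ∫ ω, |(μ[(fun ω => (A t₀ ω - A t ω) / (t₀ - t)) - (fun ω => B t₀ ω + C t₀ ω)|ℱ t]) ω| ∂μ := by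
      refine integral_congr_ae (hs.mono fun ω hω => ?_)
      have h3 := hω.symm
      simp only [Pi.sub_apply] at h3
      beta_reduce
      rw [h3]
    have h2 := integral_abs_condExp_le (μ := μ) (m := ℱ t)
      ((fun ω => (A t₀ ω - A t ω) / (t₀ - t)) - fun ω => B t₀ ω + C t₀ ω)
    rw [h1]
    refine h2.trans_eq ?_
    refine integral_congr_ae (Filter.Eventually.of_forall fun ω => ?_)
    beta_reduce
    rw [Pi.sub_apply]
  calc ∫ ω, |(μ[fun ω' => A t₀ ω' - A t ω'|ℱ t]) ω / (t₀ - t) - (B t₀ ω + C t₀ ω)| ∂μ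
      = ∫ ω, |(μ[fun ω => (A t₀ ω - A t ω) / (t₀ - t)|ℱ t]) ω - (B t₀ ω + C t₀ ω)| ∂μ :=
        integral_congr_ae (hcd.mono fun ω hω => by beta_reduce at hω ⊢; rw [hω])
    _ ≤ ∫ ω, (|(μ[fun ω => (A t₀ ω - A t ω) / (t₀ - t)|ℱ t]) ω -
          (μ[fun ω => B t₀ ω + C t₀ ω|ℱ t]) ω| +
          |(μ[fun ω => B t₀ ω + C t₀ ω|ℱ t]) ω - (B t₀ ω + C t₀ ω)|) ∂μ := by
        refine integral_mono (hcXint.sub hYint).abs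
          ((hcXint.sub hcYint).abs.add ((hcYint.sub hYint)).abs) fun ω => abs_sub_le _ _ _
    _ = (∫ ω, |(μ[fun ω => (A t₀ ω - A t ω) / (t₀ - t)|ℱ t]) ω -
          (μ[fun ω => B t₀ ω + C t₀ ω|ℱ t]) ω| ∂μ) +
          ∫ ω, |(μ[fun ω => B t₀ ω + C t₀ ω|ℱ t]) ω - (B t₀ ω + C t₀ ω)| ∂μ :=
        integral_add (hcXint.sub hcYint).abs ((hcYint.sub hYint)).abs
    _ ≤ (∫ ω, |(A t₀ ω - A t ω) / (t₀ - t) - (B t₀ ω + C t₀ ω)| ∂μ) +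
          ∫ ω, |(μ[fun ω => B t₀ ω + C t₀ ω|ℱ t]) ω - (B t₀ ω + C t₀ ω)| ∂μ :=
        add_le_add_left hkey _
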